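/- Let φ(t) = (1+t)ln(1+t) − t for t ≥ 0, and for x, y, z > 0 define f(x,y,z) = (xy/2) φ(z/x) − (ln(y/x) + 1). Then for all x, y, z with 0 < x ≤ y/3, z ≥ 1.999 and y ≥ 3.95, one has f(x,y,z) > 0.001. -/

import Mathlib

open Real Set

lemma atanh_lb (w : ℝ) (h0 : 0 ≤ w) (h1 : w < 1) :
    2*(w + w^3/3 + w^5/5 + w^7/7 + w^9/9 + w^11/11) ≤ Real.log ((1+w)/(1-w)) := by
  set g : ℝ → ℝ := fun w => Real.log (1+w) - Real.log (1-w)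
      - 2*(w + w^3/3 + w^5/5 + w^7/7 + w^9/9 + w^11/11) with hg
  have hd : ∀ x ∈ Set.Ico (0:ℝ) 1, HasDerivAt g
      (1/(1+x) + 1/(1-x) - 2*(1 + x^2 + x^4 + x^6 + x^8 + x^10)) x := by
    intro x hx
    obtain ⟨hx0, hx1⟩ := hx
    have h1p : (1:ℝ)+x ≠ 0 := by linarith
    have h1m : (1:ℝ)-x ≠ 0 := by linarith
    have d1 : HasDerivAt (fun w : ℝ => Real.log (1+w)) (1/(1+x)) x := by
      simpa using ((hasDerivAt_id x).const_add 1).log h1p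
    have d2 : HasDerivAt (fun w : ℝ => Real.log (1-w)) (-(1/(1-x))) x := by
      have := ((hasDerivAt_id x).const_sub 1).log h1m
      convert this using 1 <;> simp [neg_div]
    have dp : HasDerivAt (fun w : ℝ => 2*(w + w^3/3 + w^5/5 + w^7/7 + w^9/9 + w^11/11))
        (2*(1 + x^2 + x^4 + x^6 + x^8 + x^10)) x := by
      have := ((((((hasDerivAt_id x).add ((hasDerivAt_pow 3 x).div_const 3)).add
        ((hasDerivAt_pow 5 x).div_const 5)).add ((hasDerivAt_pow 7 x).div_const 7)).add
        ((hasDerivAt_pow 9 x).div_const 9)).add ((hasDerivAt_pow 11 x).div_const 11)).const_mul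
        (2:ℝ)
      refine this.congr_deriv ?_
      push_cast
      ring
    have := (d1.sub d2).sub dp
    refine this.congr_deriv ?_
    ring
  have key : MonotoneOn g (Set.Ico (0:ℝ) 1) := by
    apply monotoneOn_of_deriv_nonneg (convex_Ico 0 1)
    · exact fun x hx => (hd x hx).continuousAt.continuousWithinAt
    · intro x hx
      rw [interior_Ico] at hx
      exact ((hd x ⟨le_of_lt hx.1, hx.2⟩).differentiableAt).differentiableWithinAt
    · intro x hx
      rw [interior_Ico] at hx
      obtain ⟨hx0, hx1⟩ := hx
      rw [(hd x ⟨le_of_lt hx0, hx1⟩).deriv]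
      have h2 : (0:ℝ) < 1 - x^2 := by nlinarith
      have h1p : (0:ℝ) < 1 + x := by linarith
      have h1m : (0:ℝ) < 1 - x := by linarith
      have e : 1/(1+x) + 1/(1-x) = 2/(1-x^2) := by field_simp; ring
      rw [e, sub_nonneg, le_div_iff₀ h2]
      nlinarith [pow_nonneg (le_of_lt hx0) 12]
  have h00 : g 0 = 0 := by simp [hg]
  have := key (left_mem_Ico.2 one_pos) ⟨h0, h1⟩ h0
  rw [h00] at this
  have hlog : Real.log ((1+w)/(1-w)) = Real.log (1+w) - Real.log (1-w) :=
    Real.log_div (by linarith) (by linarith)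
  rw [hlog]
  simpa [hg] using this

lemma atanh_ub (w : ℝ) (h0 : 0 ≤ w) (h1 : w < 1) :
    Real.log ((1+w)/(1-w)) ≤
      2*(w + w^3/3 + w^5/5 + w^7/7 + w^9/9 + w^11/11) + 2*w^13/(13*(1-w^2)) := by
  set g : ℝ → ℝ := fun w => 2*(w + w^3/3 + w^5/5 + w^7/7 + w^9/9 + w^11/11)
      + 2*w^13/(13*(1-w^2)) - (Real.log (1+w) - Real.log (1-w)) with hg
  have hd : ∀ x ∈ Set.Ico (0:ℝ) 1, HasDerivAt g
      (2*(1 + x^2 + x^4 + x^6 + x^8 + x^10)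
        + (2*(13*x^12)*(13*(1-x^2)) - 2*x^13*(13*(-(2*x))))/(13*(1-x^2))^2
        - (1/(1+x) + 1/(1-x))) x := by
    intro x hx
    obtain ⟨hx0, hx1⟩ := hx
    have h1p : (1:ℝ)+x ≠ 0 := by linarith
    have h1m : (1:ℝ)-x ≠ 0 := by linarith
    have h2 : (13:ℝ)*(1-x^2) ≠ 0 := by nlinarith
    have d1 : HasDerivAt (fun w : ℝ => Real.log (1+w)) (1/(1+x)) x := by
      simpa using ((hasDerivAt_id x).const_add 1).log h1p
    have d2 : HasDerivAt (fun w : ℝ => Real.log (1-w)) (-(1/(1-x))) x := by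
      have := ((hasDerivAt_id x).const_sub 1).log h1m
      convert this using 1 <;> simp [neg_div]
    have dp : HasDerivAt (fun w : ℝ => 2*(w + w^3/3 + w^5/5 + w^7/7 + w^9/9 + w^11/11))
        (2*(1 + x^2 + x^4 + x^6 + x^8 + x^10)) x := by
      have := ((((((hasDerivAt_id x).add ((hasDerivAt_pow 3 x).div_const 3)).add
        ((hasDerivAt_pow 5 x).div_const 5)).add ((hasDerivAt_pow 7 x).div_const 7)).add
        ((hasDerivAt_pow 9 x).div_const 9)).add ((hasDerivAt_pow 11 x).div_const 11)).const_mul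
        (2:ℝ)
      refine this.congr_deriv ?_
      push_cast
      ring
    have dq : HasDerivAt (fun w : ℝ => 2*w^13/(13*(1-w^2)))
        ((2*(13*x^12)*(13*(1-x^2)) - 2*x^13*(13*(-(2*x))))/(13*(1-x^2))^2) x := by
      have := ((hasDerivAt_pow 13 x).const_mul 2).div
        (((hasDerivAt_pow 2 x).const_sub 1).const_mul 13) h2
      refine this.congr_deriv ?_
      push_cast
      ring
    have := (dp.add dq).sub (d1.sub d2)
    refine this.congr_deriv ?_
    ring
  have key : MonotoneOn g (Set.Ico (0:ℝ) 1) := by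
    apply monotoneOn_of_deriv_nonneg (convex_Ico 0 1)
    · exact fun x hx => (hd x hx).continuousAt.continuousWithinAt
    · intro x hx
      rw [interior_Ico] at hx
      exact ((hd x ⟨le_of_lt hx.1, hx.2⟩).differentiableAt).differentiableWithinAt
    · intro x hx
      rw [interior_Ico] at hx
      obtain ⟨hx0, hx1⟩ := hx
      rw [(hd x ⟨le_of_lt hx0, hx1⟩).deriv]
      have h1p : (1:ℝ)+x ≠ 0 := by linarith
      have h1m : (1:ℝ)-x ≠ 0 := by linarith
      have h2 : (0:ℝ) < 1 - x^2 := by nlinarith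
      have heq : 2*(1 + x^2 + x^4 + x^6 + x^8 + x^10)
          + (2*(13*x^12)*(13*(1-x^2)) - 2*x^13*(13*(-(2*x))))/(13*(1-x^2))^2
          - (1/(1+x) + 1/(1-x)) = 4*x^14/(13*(1-x^2)^2) := by
        field_simp
        ring
      rw [heq]
      positivity
  have h00 : g 0 = 0 := by simp [hg]
  have := key (left_mem_Ico.2 one_pos) ⟨h0, h1⟩ h0
  rw [h00] at this
  have hlog : Real.log ((1+w)/(1-w)) = Real.log (1+w) - Real.log (1-w) :=
    Real.log_div (by linarith) (by linarith)
  rw [hlog]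
  simpa [hg] using this

lemma log_ub' (u : ℝ) (hu : 0 < u) : Real.log (1+u) ≤ u*(2+u)/(2*(1+u)) := by
  have hv : (0:ℝ) < 1+u := by linarith
  have hl : 0 < Real.log (1+u) := Real.log_pos (by linarith)
  have hs := Real.self_lt_sinh_iff.2 hl
  rw [Real.sinh_eq, Real.exp_log hv, Real.exp_neg, Real.exp_log hv] at hs
  have : ((1+u) - (1+u)⁻¹)/2 = u*(2+u)/(2*(1+u)) := by
    field_simp
    ring
  linarith [hs.le, this.symm.le, this.le]

lemma two_add_mul_log (s : ℝ) (hs : 0 ≤ s) : 2*s ≤ (2+s)*Real.log (1+s) := by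
  have h2s : (0:ℝ) < 2+s := by linarith
  set w := s/(2+s) with hw
  have h0 : 0 ≤ w := div_nonneg hs h2s.le
  have h1 : w < 1 := (div_lt_one h2s).2 (by linarith)
  have hwm : 1 - w = 2/(2+s) := by rw [hw]; field_simp; ring
  have hrw : (1+w)/(1-w) = 1+s := by
    rw [hwm, hw]
    field_simp
    ring
  have hlb := atanh_lb w h0 h1
  rw [hrw] at hlb
  have h2w : 2*w ≤ Real.log (1+s) := by
    nlinarith [pow_nonneg h0 3, pow_nonneg h0 5, pow_nonneg h0 7, pow_nonneg h0 9,
      pow_nonneg h0 11]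
  have hws : w*(2+s) = s := by
    rw [hw]
    field_simp
  nlinarith [mul_le_mul_of_nonneg_right h2w h2s.le, hws]

lemma phi_mono (a b : ℝ) (ha : 0 ≤ a) (hab : a ≤ b) :
    (1+a)*Real.log (1+a) - a ≤ (1+b)*Real.log (1+b) - b := by
  have h1 : (0:ℝ) < 1+a := by linarith
  have h2 : (0:ℝ) < 1+b := by linarith
  have hlog : 1 - (1+a)/(1+b) ≤ Real.log (1+b) - Real.log (1+a) := by
    have := Real.one_sub_inv_le_log_of_pos (div_pos h2 h1)
    rw [Real.log_div h2.ne' h1.ne', inv_div] at this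
    exact this
  have hla : 0 ≤ Real.log (1+a) := Real.log_nonneg (by linarith)
  have hmul := mul_le_mul_of_nonneg_left hlog h2.le
  have hbb : (1+b)*(1 - (1+a)/(1+b)) = b - a := by field_simp; ring
  have hba : 0 ≤ (b-a) * Real.log (1+a) := mul_nonneg (by linarith) hla
  nlinarith

lemma F_anti (y : ℝ) (hy : 3.95 ≤ y) :
    AntitoneOn (fun t : ℝ =>
      y/2*((t+1.999)*(Real.log (t+1.999) - Real.log t) - 1.999) + Real.log t)
      (Set.Ioc 0 (y/3)) := by
  have hy0 : (0:ℝ) < y := by linarith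
  have hd : ∀ t ∈ Set.Ioc (0:ℝ) (y/3), HasDerivAt (fun t : ℝ =>
      y/2*((t+1.999)*(Real.log (t+1.999) - Real.log t) - 1.999) + Real.log t)
      (y/2*((Real.log (t+1.999) - Real.log t) + (t+1.999)*(1/(t+1.999) - 1/t)) + 1/t) t := by
    intro t ht
    have ht0 : 0 < t := ht.1
    have htc : (0:ℝ) < t + 1.999 := by linarith
    have d1 : HasDerivAt (fun s : ℝ => Real.log (s+1.999)) (1/(t+1.999)) t := by
      simpa using ((hasDerivAt_id t).add_const (1.999:ℝ)).log htc.ne'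
    have d2 : HasDerivAt (fun s : ℝ => Real.log s) (1/t) t := by
      simpa [one_div] using Real.hasDerivAt_log ht0.ne'
    have dmul := ((hasDerivAt_id t).add_const (1.999:ℝ)).mul (d1.sub d2)
    have := ((dmul.sub_const (1.999:ℝ)).const_mul (y/2)).add d2
    refine this.congr_deriv ?_
    simp only [id_eq, Pi.mul_apply, Pi.sub_apply]
    ring
  apply antitoneOn_of_deriv_nonpos (convex_Ioc _ _)
  · exact fun t ht => (hd t ht).continuousAt.continuousWithinAt
  · intro t ht
    rw [interior_Ioc] at ht
    exact ((hd t (Set.Ioo_subset_Ioc_self ht)).differentiableAt).differentiableWithinAt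
  · intro t ht
    rw [interior_Ioc] at ht
    obtain ⟨ht0, ht3⟩ := ht
    rw [(hd t (Set.Ioo_subset_Ioc_self ⟨ht0, ht3⟩)).deriv]
    have htc : (0:ℝ) < t + 1.999 := by linarith
    have hu : (0:ℝ) < 1.999/t := by positivity
    have hlog1 : Real.log (t+1.999) - Real.log t = Real.log (1+1.999/t) := by
      rw [← Real.log_div htc.ne' ht0.ne']
      congr 1
      field_simp
    have he : (t+1.999)*(1/(t+1.999) - 1/t) = -(1.999/t) := by
      field_simp
      ring
    rw [hlog1, he]
    have hbound : Real.log (1+1.999/t) + -(1.999/t) ≤ -((1.999/t)^2/(2*(1+1.999/t))) := by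
      have h1 := log_ub' (1.999/t) hu
      have heq : (1.999/t)*(2+1.999/t)/(2*(1+1.999/t)) - 1.999/t
          = -((1.999/t)^2/(2*(1+1.999/t))) := by
        have hne : (1:ℝ)+1.999/t ≠ 0 := by positivity
        field_simp
        ring
      linarith
    have hmul := mul_le_mul_of_nonneg_left hbound (by positivity : (0:ℝ) ≤ y/2)
    have hfin : 1/t ≤ y/2*((1.999/t)^2/(2*(1+1.999/t))) := by
      have heq2 : y/2*((1.999/t)^2/(2*(1+1.999/t))) = y*1.999^2/(4*t*(t+1.999)) := by
        have hne : (1:ℝ)+1.999/t ≠ 0 := by positivity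
        field_simp
        ring
      rw [heq2, div_le_div_iff₀ ht0 (by positivity)]
      nlinarith
    linarith

lemma K_mono :
    MonotoneOn (fun y : ℝ => y/2*((y/3+1.999)*(Real.log (y+5.997) - Real.log y) - 1.999))
      (Set.Ici (3.95:ℝ)) := by
  have hd : ∀ y ∈ Set.Ici (3.95:ℝ), HasDerivAt
      (fun y : ℝ => y/2*((y/3+1.999)*(Real.log (y+5.997) - Real.log y) - 1.999))
      (1/2*((y/3+1.999)*(Real.log (y+5.997) - Real.log y) - 1.999)
        + y/2*(1/3*(Real.log (y+5.997) - Real.log y) + (y/3+1.999)*(1/(y+5.997) - 1/y))) y := by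
    intro y hy
    have hy0 : (0:ℝ) < y := by
      have := hy
      simp only [Set.mem_Ici] at this
      linarith
    have hyc : (0:ℝ) < y + 5.997 := by linarith
    have d1 : HasDerivAt (fun s : ℝ => Real.log (s+5.997)) (1/(y+5.997)) y := by
      simpa using ((hasDerivAt_id y).add_const (5.997:ℝ)).log hyc.ne'
    have d2 : HasDerivAt (fun s : ℝ => Real.log s) (1/y) y := by
      simpa [one_div] using Real.hasDerivAt_log hy0.ne'
    have dinner := (((hasDerivAt_id y).div_const 3).add_const (1.999:ℝ)).mul (d1.sub d2)
    have := ((hasDerivAt_id y).div_const 2).mul (dinner.sub_const (1.999:ℝ))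
    refine this.congr_deriv ?_
    simp only [id_eq, Pi.mul_apply, Pi.sub_apply]
  apply monotoneOn_of_deriv_nonneg (convex_Ici _)
  · exact fun y hy => (hd y hy).continuousAt.continuousWithinAt
  · intro y hy
    rw [interior_Ici] at hy
    exact ((hd y (Set.mem_Ici.2 (le_of_lt hy))).differentiableAt).differentiableWithinAt
  · intro y hy
    rw [interior_Ici] at hy
    have hy0 : (0:ℝ) < y := by
      simp only [Set.mem_Ioi] at hy
      linarith
    have hyc : (0:ℝ) < y + 5.997 := by linarith
    rw [(hd y (Set.mem_Ici.2 (le_of_lt hy))).deriv]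
    have hL : Real.log (y+5.997) - Real.log y = Real.log (1+5.997/y) := by
      rw [← Real.log_div hyc.ne' hy0.ne']
      congr 1
      field_simp
    have hkey := two_add_mul_log (5.997/y) (by positivity)
    have hmul := mul_le_mul_of_nonneg_left hkey (by positivity : (0:ℝ) ≤ y/6)
    have e1 : y/6*((2+5.997/y)*Real.log (1+5.997/y)) = (y/3+0.9995)*Real.log (1+5.997/y) := by
      field_simp
      ring
    have e2 : y/6*(2*(5.997/y)) = 1.999 := by
      field_simp
      ring
    rw [e1, e2] at hmul
    have heq : 1/2*((y/3+1.999)*(Real.log (y+5.997) - Real.log y) - 1.999)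
        + y/2*(1/3*(Real.log (y+5.997) - Real.log y) + (y/3+1.999)*(1/(y+5.997) - 1/y))
        = (y/3+0.9995)*(Real.log (y+5.997) - Real.log y) - 1.999 := by
      field_simp
      ring
    rw [heq, hL]
    linarith

/-- **Lemma (lower bound on `f`).**
With `φ(t) = (1+t)ln(1+t) − t` and `f(x,y,z) = (xy/2) φ(z/x) − (ln(y/x) + 1)`,
for `0 < x ≤ y/3`, `z ≥ 1.999` and `y ≥ 3.95` we have `f(x,y,z) > 0.001`. -/
theorem f_gt (x y z : ℝ) (hx : 0 < x) (hxy : x ≤ y / 3) (hz : 1.999 ≤ z) (hy : 3.95 ≤ y) :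
    0.001 <
      x * y / 2 * ((1 + z / x) * Real.log (1 + z / x) - z / x) - (Real.log (y / x) + 1) := by
  have hy0 : (0:ℝ) < y := by linarith
  have hy3 : (0:ℝ) < y/3 := by linarith
  -- Step A : reduce z to 1.999
  have hzx : (1.999:ℝ)/x ≤ z/x := by gcongr
  have hphi := phi_mono (1.999/x) (z/x) (by positivity) hzx
  have hxy2 : (0:ℝ) < x*y/2 := by positivity
  have hstepA : x*y/2*((1+1.999/x)*Real.log (1+1.999/x) - 1.999/x) - (Real.log (y/x) + 1)
      ≤ x * y / 2 * ((1 + z / x) * Real.log (1 + z / x) - z / x) - (Real.log (y / x) + 1) := by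
    nlinarith [mul_le_mul_of_nonneg_left hphi hxy2.le]
  -- Step B : rewrite in product form
  have hxc : (0:ℝ) < x + 1.999 := by linarith
  have hstepB : x*y/2*((1+1.999/x)*Real.log (1+1.999/x) - 1.999/x) - (Real.log (y/x) + 1)
      = (y/2*((x+1.999)*(Real.log (x+1.999) - Real.log x) - 1.999) + Real.log x)
        - Real.log y - 1 := by
    rw [show (1:ℝ)+1.999/x = (x+1.999)/x by field_simp,
      Real.log_div hxc.ne' hx.ne', Real.log_div hy0.ne' hx.ne']
    field_simp
    ring
  -- Step C : antitone in x
  have hanti := F_anti y hy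
  have hC := hanti (Set.mem_Ioc.2 ⟨hx, hxy⟩) (Set.mem_Ioc.2 ⟨hy3, le_refl _⟩) hxy
  -- hC : F (y/3) ≤ F x
  -- Step D : rewrite F (y/3)
  have hyc : (0:ℝ) < y + 5.997 := by linarith
  have hstepD : y/2*((y/3+1.999)*(Real.log (y/3+1.999) - Real.log (y/3)) - 1.999)
        + Real.log (y/3)
      = y/2*((y/3+1.999)*(Real.log (y+5.997) - Real.log y) - 1.999) + Real.log y
        - Real.log 3 := by
    rw [show y/3+(1.999:ℝ) = (y+5.997)/3 by ring,
      Real.log_div hyc.ne' (by norm_num : (3:ℝ) ≠ 0),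
      Real.log_div hy0.ne' (by norm_num : (3:ℝ) ≠ 0)]
    ring
  -- Step E : monotone in y
  have hE := K_mono (Set.mem_Ici.2 (le_refl (3.95:ℝ))) (Set.mem_Ici.2 hy) hy
  -- Step F : numeric bound
  have hlow := atanh_lb (5997/13897) (by norm_num) (by norm_num)
  rw [show ((1:ℝ)+5997/13897)/(1-5997/13897) = 9.947/3.95 by norm_num] at hlow
  rw [Real.log_div (by norm_num) (by norm_num)] at hlow
  have hup := atanh_ub (1/2) (by norm_num) (by norm_num)
  rw [show ((1:ℝ)+1/2)/(1-1/2) = 3 by norm_num] at hup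
  have hK395 : (3.95:ℝ)/2*((3.95/3+1.999)*(Real.log (3.95+5.997) - Real.log 3.95) - 1.999)
      ≥ 3.95/2*((3.95/3+1.999)*(2*((5997:ℝ)/13897 + (5997/13897)^3/3 + (5997/13897)^5/5
        + (5997/13897)^7/7 + (5997/13897)^9/9 + (5997/13897)^11/11)) - 1.999) := by
    have h995 : (3.95:ℝ)+5.997 = 9.947 := by norm_num
    rw [h995]
    nlinarith [hlow]
  have hnum : (0.001:ℝ) < 3.95/2*((3.95/3+1.999)*(2*((5997:ℝ)/13897 + (5997/13897)^3/3
      + (5997/13897)^5/5 + (5997/13897)^7/7 + (5997/13897)^9/9 + (5997/13897)^11/11)) - 1.999)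
      - (2*((1:ℝ)/2 + (1/2)^3/3 + (1/2)^5/5 + (1/2)^7/7 + (1/2)^9/9 + (1/2)^11/11)
        + 2*(1/2)^13/(13*(1-(1/2)^2))) - 1 := by
    norm_num
  linarith [hstepA, hstepB.ge, hstepB.le, hC, hstepD.ge, hstepD.le, hE, hK395, hnum, hup]
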